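/- In the category FinStoch of finite sets and stochastic matrices, every morphism f : Z → X ⊗ Y admits a conditional over X: there exists f_{Y|XZ} : X ⊗ Z → Y such that f = (1_X ⊗ f_{Y|XZ}) ∘ (δ_X ⊗ 1_Z) ∘ (f_{X|Z} ⊗ 1_Z) ∘ δ_Z, where f_{X|Z} = (1_X ⊗ ε_Y) ∘ f is the marginal. -/
import Mathlib


open Finset

/-- In `FinStoch`, every morphism `f : Z → X ⊗ Y` (a stochastic matrix
`f(x,y ∣ z)`) admits a conditional over `X`: there is a stochastic matrix
`g(y ∣ x,z)` with `f(x,y ∣ z) = (∑_{y'} f(x,y' ∣ z)) · g(y ∣ x,z)` for all `x`, `y`, `z`,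
i.e. `f = (1_X ⊗ f_{Y|XZ}) ∘ (δ_X ⊗ 1_Z) ∘ (f_{X|Z} ⊗ 1_Z) ∘ δ_Z`. -/
theorem finStoch_conditionals_exist {X Y Z : Type*} [Fintype X] [Fintype Y] [Fintype Z]
    (f : Z → X × Y → ℝ) (hnn : ∀ z p, 0 ≤ f z p) (hsum : ∀ z, ∑ p, f z p = 1) :
    ∃ g : X × Z → Y → ℝ,
      (∀ q y, 0 ≤ g q y) ∧ (∀ q, ∑ y, g q y = 1) ∧
      ∀ (x : X) (y : Y) (z : Z), f z (x, y) = (∑ y', f z (x, y')) * g (x, z) y := by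
  rcases isEmpty_or_nonempty Z with hZ | hZ
  · exact ⟨fun _ _ => 0, fun q => (IsEmpty.false q.2).elim,
      fun q => (IsEmpty.false q.2).elim, fun x y z => (IsEmpty.false z).elim⟩
  have hY : Nonempty Y := by
    by_contra h
    have hE : IsEmpty Y := not_nonempty_iff.mp h
    have := hsum (Classical.arbitrary Z)
    rw [Finset.univ_eq_empty, Finset.sum_empty] at this
    exact zero_ne_one this
  have hcard : (0 : ℝ) < (Fintype.card Y : ℝ) := by
    exact_mod_cast Fintype.card_pos
  refine ⟨fun q y => if (∑ y', f q.2 (q.1, y')) = 0 then (Fintype.card Y : ℝ)⁻¹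
      else f q.2 (q.1, y) / ∑ y', f q.2 (q.1, y'), ?_, ?_, ?_⟩
  · intro q y
    dsimp only
    split_ifs with h
    · positivity
    · have hpos : 0 < ∑ y', f q.2 (q.1, y') :=
        lt_of_le_of_ne (Finset.sum_nonneg fun _ _ => hnn _ _) (Ne.symm h)
      exact div_nonneg (hnn _ _) hpos.le
  · intro q
    dsimp only
    split_ifs with h
    · rw [Finset.sum_const, Finset.card_univ, nsmul_eq_mul,
        mul_inv_cancel₀ (ne_of_gt hcard)]
    · rw [← Finset.sum_div, div_self h]
  · intro x y z
    dsimp only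
    split_ifs with h
    · have : f z (x, y) = 0 := by
        have := (Finset.sum_eq_zero_iff_of_nonneg (fun y' _ => hnn z (x, y'))).mp h
        exact this y (Finset.mem_univ y)
      rw [this, h, zero_mul]
    · rw [mul_div_cancel₀ _ h]
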